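/- Fix a = 1/(2m − 1) with m a positive integer, and consider the strip-crossing recurrences with initial data a_0 = a, α_0 = 0, and h_0 = ℓ·a where ℓ is a positive integer. Then the trajectory is expanding: for all n ∈ ℕ, a_n = a and h_{2n} = h_0 + 2n·a; in particular h_{2n} → +∞ as n → ∞. -/
import Mathlib


/-- One step of the strip-crossing recurrences: from the triple `(h_n, a_n, α_n)`
compute `γ_n = ⌊(1 − a_n)/a⌋`, `β_n = a·frac((1 − a_n)/a)`, and then
`h_{n+1} = −(h_n + (−1)^{α_n}·(a_n + (−1)^{γ_n+1}·β_n − (1 − (−1)^{γ_n})·a/2))`,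
`α_{n+1} = (α_n + γ_n + 1 + ⌊(2|h_{n+1}| + β_n)/a⌋) mod 2`,
`a_{n+1} = a·(1 − frac((2|h_{n+1}| + β_n)/a))`. -/
noncomputable def stripStep (a : ℝ) (s : ℝ × ℝ × ℤ) : ℝ × ℝ × ℤ :=
  let h := s.1
  let an := s.2.1
  let α := s.2.2
  let γ : ℤ := ⌊(1 - an) / a⌋
  let β : ℝ := a * Int.fract ((1 - an) / a)
  let h' : ℝ :=
    -(h + (-1 : ℝ) ^ α * (an + (-1 : ℝ) ^ (γ + 1) * β - (1 - (-1 : ℝ) ^ γ) * a / 2))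
  let α' : ℤ := (α + γ + 1 + ⌊(2 * |h'| + β) / a⌋) % 2
  let a' : ℝ := a * (1 - Int.fract ((2 * |h'| + β) / a))
  (h', a', α')

@[nolint unusedArguments]
lemma strip_key (m : ℕ) (hm : 0 < m) (a : ℝ) (ha : a = 1 / (2 * (m : ℝ) - 1))
    (ℓ : ℕ) : ∀ n : ℕ,
    (stripStep a)^[n] ((ℓ : ℝ) * a, a, 0) =
      ((-1 : ℝ) ^ n * ((ℓ : ℝ) + n) * a, a, (n : ℤ) % 2) := by
  have hm1 : (1 : ℝ) ≤ (m : ℝ) := by exact_mod_cast hm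
  have hc : (0 : ℝ) < 2 * (m : ℝ) - 1 := by linarith
  have ha0 : 0 < a := by rw [ha]; positivity
  have hane : a ≠ 0 := ne_of_gt ha0
  have hfrac1 : (1 - a) / a = ((2 * (m : ℤ) - 2 : ℤ) : ℝ) := by
    rw [ha]; push_cast; field_simp; ring
  intro n
  induction n with
  | zero => simp
  | succ n ih =>
    rw [Function.iterate_succ_apply', ih]
    have hsign : (-1 : ℝ) ^ ((n : ℤ) % 2) = (-1 : ℝ) ^ n := by
      rcases Nat.even_or_odd n with he | ho
      · rw [Nat.even_iff] at he
        rw [show ((n : ℤ) % 2) = 0 by omega, zpow_zero,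
          (Nat.even_iff.mpr he).neg_one_pow]
      · rw [Nat.odd_iff] at ho
        rw [show ((n : ℤ) % 2) = 1 by omega, zpow_one,
          (Nat.odd_iff.mpr ho).neg_one_pow]
    have hγeven : (-1 : ℝ) ^ ((2 * (m : ℤ) - 2 : ℤ)) = 1 := by
      rw [show (2 * (m : ℤ) - 2) = 2 * ((m : ℤ) - 1) by ring, zpow_mul]
      norm_num
    simp only [stripStep, hfrac1, Int.floor_intCast, Int.fract_intCast, mul_zero,
      hsign, hγeven]
    have hh' : -((-1 : ℝ) ^ n * ((ℓ : ℝ) + n) * a +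
        (-1 : ℝ) ^ n * (a + 0 - (1 - 1) * a / 2)) =
        (-1 : ℝ) ^ (n + 1) * ((ℓ : ℝ) + (n + 1 : ℕ)) * a := by
      push_cast
      ring
    rw [hh']
    have habs : |(-1 : ℝ) ^ (n + 1) * ((ℓ : ℝ) + (n + 1 : ℕ)) * a| =
        ((ℓ : ℝ) + (n + 1 : ℕ)) * a := by
      rw [abs_mul, abs_mul, abs_pow, abs_neg, abs_one, one_pow, one_mul,
        abs_of_pos ha0, abs_of_nonneg (by positivity)]
    rw [habs]
    have hdiv : (2 * (((ℓ : ℝ) + (n + 1 : ℕ)) * a) + 0) / a =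
        ((2 * ((ℓ : ℤ) + (n + 1 : ℕ)) : ℤ) : ℝ) := by
      push_cast; field_simp; ring
    rw [hdiv, Int.floor_intCast, Int.fract_intCast]
    refine Prod.ext rfl (Prod.ext ?_ ?_)
    · simp
    · show ((n : ℤ) % 2 + (2 * (m : ℤ) - 2) + 1 + 2 * ((ℓ : ℤ) + (n + 1 : ℕ))) % 2
        = ((n : ℕ) + 1 : ℤ) % 2
      push_cast
      omega

/-- For `a = 1/(2m − 1)` with `m` a positive integer and initial data `a₀ = a`,
`α₀ = 0`, `h₀ = ℓ·a` with `ℓ` a positive integer, the trajectory is expanding: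
`a_n = a` for all `n`, `h_{2n} = h₀ + 2n·a`, and `h_{2n} → +∞`. -/
theorem stripStep_expanding (m : ℕ) (hm : 0 < m) (a : ℝ)
    (ha : a = 1 / (2 * (m : ℝ) - 1))
    (ℓ : ℕ) (hℓ : 0 < ℓ) (h₀ : ℝ) (hh₀ : h₀ = (ℓ : ℝ) * a) :
    (∀ n : ℕ, ((stripStep a)^[n] (h₀, a, 0)).2.1 = a) ∧
    (∀ n : ℕ, ((stripStep a)^[2 * n] (h₀, a, 0)).1 = h₀ + 2 * (n : ℝ) * a) ∧
    Filter.Tendsto (fun n : ℕ => ((stripStep a)^[2 * n] (h₀, a, 0)).1)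
      Filter.atTop Filter.atTop := by
  have hm1 : (1 : ℝ) ≤ (m : ℝ) := by exact_mod_cast hm
  have ha0 : 0 < a := by rw [ha]; apply one_div_pos.mpr; linarith
  have key := strip_key m hm a ha ℓ
  subst hh₀
  have h2 : ∀ n : ℕ, ((stripStep a)^[2 * n] ((ℓ : ℝ) * a, a, 0)).1
      = (ℓ : ℝ) * a + 2 * (n : ℝ) * a := by
    intro n
    rw [key (2 * n)]
    have : (-1 : ℝ) ^ (2 * n) = 1 := by rw [pow_mul]; norm_num
    rw [this]
    push_cast
    ring
  refine ⟨fun n => by rw [key n], h2, ?_⟩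
  have : Filter.Tendsto (fun n : ℕ => (ℓ : ℝ) * a + 2 * (n : ℝ) * a)
      Filter.atTop Filter.atTop := by
    apply Filter.tendsto_atTop_add_const_left
    have := (tendsto_natCast_atTop_atTop (R := ℝ)).atTop_mul_const
      (show (0:ℝ) < 2 * a by linarith)
    simpa [mul_comm, mul_assoc, mul_left_comm] using this
  exact this.congr fun n => (h2 n).symm
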